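/- arXiv:2409.14639 — 8 statements merged into one kernel-verified Lean document; each statement's English description precedes it below -/
import Mathlib

section
/- Let n ≥ 1 and let M_p, M_m, M_d, D_d, K_d be real n×n matrices with M_d and M_m invertible and with the matrix 1 - M_p M_d⁻¹ invertible. Set M_t = M_p + M_m, h_t = h_p + h_m, and Γ = 1 - M_m M_d⁻¹ (1 - M_p M_d⁻¹)⁻¹. Suppose vectors a, a_d, e, ė, h_p, h_m, f_s, f_ext, u ∈ ℝⁿ satisfy the payload dynamics M_p a + h_p = -f_s + f_ext, the manipulator dynamics M_m a + h_m = u + f_s, and the impedance control law u = (M_t - Γ M_p)(a_d - M_d⁻¹(D_d ė + K_d e)) + h_t - Γ(f_s + h_p). Then the desired impedance relation M_d (a - a_d) + D_d ė + K_d e = f_ext holds. -/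
open Matrix

/-- The impedance control law for a manipulator carrying a heavy payload establishes
the desired impedance relation. -/
theorem impedance_control_establishes_desired_impedance
    {n : ℕ} (hn : 1 ≤ n)
    (M_p M_m M_d D_d K_d : Matrix (Fin n) (Fin n) ℝ)
    (hMd : IsUnit M_d) (hMm : IsUnit M_m)
    (hinv : IsUnit (1 - M_p * M_d⁻¹))
    (a a_d e edot h_p h_m f_s f_ext u : Fin n → ℝ)
    (M_t : Matrix (Fin n) (Fin n) ℝ) (hMt : M_t = M_p + M_m)
    (h_t : Fin n → ℝ) (hht : h_t = h_p + h_m)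
    (Γ : Matrix (Fin n) (Fin n) ℝ)
    (hΓ : Γ = 1 - M_m * M_d⁻¹ * (1 - M_p * M_d⁻¹)⁻¹)
    (hpayload : M_p *ᵥ a + h_p = -f_s + f_ext)
    (hmanip : M_m *ᵥ a + h_m = u + f_s)
    (hctrl : u = (M_t - Γ * M_p) *ᵥ (a_d - M_d⁻¹ *ᵥ (D_d *ᵥ edot + K_d *ᵥ e)) + h_t
        - Γ *ᵥ (f_s + h_p)) :
    M_d *ᵥ (a - a_d) + D_d *ᵥ edot + K_d *ᵥ e = f_ext := by
  set B := (1 - M_p * M_d⁻¹)⁻¹ with hBdef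
  have hMdDet : IsUnit M_d.det := (Matrix.isUnit_iff_isUnit_det _).mp hMd
  have hBDet : IsUnit (1 - M_p * M_d⁻¹).det := (Matrix.isUnit_iff_isUnit_det _).mp hinv
  have hAMd : M_d⁻¹ * M_d = 1 := Matrix.nonsing_inv_mul _ hMdDet
  have hMdA : M_d * M_d⁻¹ = 1 := Matrix.mul_nonsing_inv _ hMdDet
  have hB : B * (1 - M_p * M_d⁻¹) = 1 := Matrix.nonsing_inv_mul _ hBDet
  -- key matrix identity: B * M_d = M_d + B * M_p
  have key0 : B * M_d = M_d + B * M_p := by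
    have h1 : B * ((1 - M_p * M_d⁻¹) * M_d) = M_d := by
      rw [← Matrix.mul_assoc, hB, Matrix.one_mul]
    have h2 : (1 - M_p * M_d⁻¹) * M_d = M_d - M_p := by
      rw [Matrix.sub_mul, Matrix.one_mul, Matrix.mul_assoc, hAMd, Matrix.mul_one]
    rw [h2, Matrix.mul_sub] at h1
    linear_combination (norm := noncomm_ring) h1
  have key : M_t - Γ * M_p = (1 - Γ) * M_d := by
    rw [hMt, hΓ, sub_sub_cancel]
    have h1 : M_m * M_d⁻¹ * B * M_d = M_m + M_m * M_d⁻¹ * (B * M_p) := by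
      rw [Matrix.mul_assoc, key0, Matrix.mul_add, Matrix.mul_assoc M_m, hAMd,
        Matrix.mul_one]
    rw [h1]
    noncomm_ring
  set v := M_d⁻¹ *ᵥ (D_d *ᵥ edot + K_d *ᵥ e) with hv
  have hsum : M_t *ᵥ a + h_t = u + f_ext := by
    have h2 : (M_p *ᵥ a + h_p) + (M_m *ᵥ a + h_m) = (-f_s + f_ext) + (u + f_s) := by
      rw [hpayload, hmanip]
    rw [hMt, hht, Matrix.add_mulVec]
    linear_combination h2
  have e2 : (M_t - Γ * M_p) *ᵥ (a_d - v) = u - h_t + Γ *ᵥ (f_s + h_p) := by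
    rw [hctrl]; abel
  have e3 : (M_t - Γ * M_p) *ᵥ a = (u + f_ext - h_t) - Γ *ᵥ (M_p *ᵥ a) := by
    rw [Matrix.sub_mulVec, Matrix.mulVec_mulVec]
    rw [eq_sub_iff_add_eq.mpr hsum]
  have e4 : Γ *ᵥ (f_s + h_p) + Γ *ᵥ (M_p *ᵥ a) = Γ *ᵥ f_ext := by
    rw [← Matrix.mulVec_add]
    have h5 : f_s + h_p + M_p *ᵥ a = f_ext := by linear_combination hpayload
    rw [h5]
  have step1 : ((1 - Γ) * M_d) *ᵥ (a - a_d + v) = (1 - Γ) *ᵥ f_ext := by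
    rw [← key]
    have e1 : a - a_d + v = a - (a_d - v) := by abel
    rw [e1, Matrix.mulVec_sub, e2, e3, Matrix.sub_mulVec, Matrix.one_mulVec, ← e4]
    abel
  have hunit : IsUnit (1 - Γ) := by
    rw [hΓ, sub_sub_cancel]
    exact (hMm.mul ((Matrix.isUnit_nonsing_inv_iff).mpr hMd)).mul
      ((Matrix.isUnit_nonsing_inv_iff).mpr hinv)
  have hunitDet : IsUnit (1 - Γ).det := (Matrix.isUnit_iff_isUnit_det _).mp hunit
  have step2 : M_d *ᵥ (a - a_d + v) = f_ext := by
    have h := congrArg (fun x => (1 - Γ)⁻¹ *ᵥ x) step1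
    simp only [Matrix.mulVec_mulVec, ← Matrix.mul_assoc,
      Matrix.nonsing_inv_mul _ hunitDet, Matrix.one_mul, Matrix.one_mulVec] at h
    exact h
  rw [Matrix.mulVec_add, hv, Matrix.mulVec_mulVec, hMdA, Matrix.one_mulVec] at step2
  rw [← step2]
  abel
end

section
/- Let M_p, M_d, D_d, K_d be real n×n matrices with M_p and M_d invertible and with both 1 - M_p M_d⁻¹ and 1 - M_d M_p⁻¹ invertible. Suppose vectors a, a_d, e, ė, h_p, f_s, f_ext ∈ ℝⁿ satisfy the payload dynamics M_p a + h_p = -f_s + f_ext and the impedance model M_d (a - a_d) + D_d ė + K_d e = f_ext. Then f_ext = (1 - M_p M_d⁻¹)⁻¹ (f_s + h_p + M_p a_d) + (1 - M_d M_p⁻¹)⁻¹ (D_d ė + K_d e). -/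
open Matrix

/-- Expression of the external contact force in terms of the sensor reading, payload
nonlinear term, desired acceleration, and tracking errors (eq. (7a) of the paper). -/
theorem external_force_expression
    {n : ℕ} (hn : 1 ≤ n)
    (M_p M_d D_d K_d : Matrix (Fin n) (Fin n) ℝ)
    (hMp : IsUnit M_p) (hMd : IsUnit M_d)
    (hinv1 : IsUnit (1 - M_p * M_d⁻¹)) (hinv2 : IsUnit (1 - M_d * M_p⁻¹))
    (a a_d e edot h_p f_s f_ext : Fin n → ℝ)
    (hpayload : M_p *ᵥ a + h_p = -f_s + f_ext)
    (himp : M_d *ᵥ (a - a_d) + D_d *ᵥ edot + K_d *ᵥ e = f_ext) :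
    f_ext = (1 - M_p * M_d⁻¹)⁻¹ *ᵥ (f_s + h_p + M_p *ᵥ a_d)
      + (1 - M_d * M_p⁻¹)⁻¹ *ᵥ (D_d *ᵥ edot + K_d *ᵥ e) := by
  set A : Matrix (Fin n) (Fin n) ℝ := 1 - M_p * M_d⁻¹ with hA
  set B : Matrix (Fin n) (Fin n) ℝ := 1 - M_d * M_p⁻¹ with hB
  set u : Fin n → ℝ := f_s + h_p + M_p *ᵥ a_d with hu
  set v : Fin n → ℝ := D_d *ᵥ edot + K_d *ᵥ e with hv
  have hMddet : IsUnit M_d.det := (Matrix.isUnit_iff_isUnit_det _).mp hMd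
  have hMpdet : IsUnit M_p.det := (Matrix.isUnit_iff_isUnit_det _).mp hMp
  have hAdet : IsUnit A.det := (Matrix.isUnit_iff_isUnit_det _).mp hinv1
  have hBdet : IsUnit B.det := (Matrix.isUnit_iff_isUnit_det _).mp hinv2
  -- matrix identity: A = -(M_p * M_d⁻¹) * B
  have hAPB : A = -(M_p * M_d⁻¹) * B := by
    rw [hA, hB]
    have h1 : M_d⁻¹ * M_d = 1 := Matrix.nonsing_inv_mul _ hMddet
    calc (1 : Matrix (Fin n) (Fin n) ℝ) - M_p * M_d⁻¹
        = -(M_p * M_d⁻¹) + M_p * (M_d⁻¹ * M_d) * M_p⁻¹ := by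
          rw [h1]; rw [Matrix.mul_one]
          rw [Matrix.mul_nonsing_inv _ hMpdet]; abel
      _ = -(M_p * M_d⁻¹) * (1 - M_d * M_p⁻¹) := by noncomm_ring
  have hAB : A * B⁻¹ = -(M_p * M_d⁻¹) := by
    rw [hAPB, Matrix.mul_assoc, Matrix.mul_nonsing_inv _ hBdet, Matrix.mul_one]
  -- A *ᵥ f_ext = u - (M_p * M_d⁻¹) *ᵥ v
  have hfe : f_ext = M_d *ᵥ (a - a_d) + v := by rw [hv, ← himp]; abel
  have hfe2 : f_ext = M_p *ᵥ a + h_p + f_s := by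
    rw [hpayload]; abel
  have hc : (M_p * M_d⁻¹) *ᵥ (M_d *ᵥ (a - a_d)) = M_p *ᵥ (a - a_d) := by
    rw [Matrix.mulVec_mulVec, Matrix.mul_assoc, Matrix.nonsing_inv_mul _ hMddet,
      Matrix.mul_one]
  have hAf : A *ᵥ f_ext = u - (M_p * M_d⁻¹) *ᵥ v := by
    rw [hA, Matrix.sub_mulVec, Matrix.one_mulVec]
    nth_rewrite 2 [hfe]
    rw [Matrix.mulVec_add, hc]
    nth_rewrite 1 [hfe2]
    rw [hu, Matrix.mulVec_sub]
    abel
  -- conclude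
  have key : A *ᵥ (A⁻¹ *ᵥ u + B⁻¹ *ᵥ v) = A *ᵥ f_ext := by
    rw [Matrix.mulVec_add, Matrix.mulVec_mulVec, Matrix.mulVec_mulVec,
      Matrix.mul_nonsing_inv _ hAdet, hAB, hAf, Matrix.one_mulVec,
      Matrix.neg_mulVec]
    abel
  have := congrArg (fun w => A⁻¹ *ᵥ w) key
  simpa [Matrix.mulVec_mulVec, Matrix.nonsing_inv_mul _ hAdet,
    Matrix.one_mulVec] using this.symm
end

section
/- Let M_p, M_d be real n×n matrices with M_Δ = M_d - M_p invertible. Suppose vectors a, a*, h_p, h_Δ, f_s, f_ext ∈ ℝⁿ satisfy the payload dynamics M_p a + h_p = -f_s + f_ext and the outer-loop equation M_Δ a* + h_Δ = f_s, and set the acceleration error ã = a* - a. Then f_ext = f*_ext - M_p ã, where f*_ext = (1 + M_p M_Δ⁻¹) f_s + h_p - M_p M_Δ⁻¹ h_Δ. -/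
open Matrix

/-- The external force equals its outer-loop estimate plus the estimation error
`-M_p ã` (eqs. (16)-(17) of the paper). -/
theorem external_force_estimate_decomposition
    {n : ℕ} (hn : 1 ≤ n)
    (M_p M_d : Matrix (Fin n) (Fin n) ℝ)
    (M_Δ : Matrix (Fin n) (Fin n) ℝ) (hMΔ : M_Δ = M_d - M_p)
    (hMΔunit : IsUnit M_Δ)
    (a astar h_p h_Δ f_s f_ext : Fin n → ℝ)
    (hpayload : M_p *ᵥ a + h_p = -f_s + f_ext)
    (houter : M_Δ *ᵥ astar + h_Δ = f_s)
    (atilde : Fin n → ℝ) (hatilde : atilde = astar - a)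
    (fstar : Fin n → ℝ)
    (hfstar : fstar = (1 + M_p * M_Δ⁻¹) *ᵥ f_s + h_p - (M_p * M_Δ⁻¹) *ᵥ h_Δ) :
    f_ext = fstar - M_p *ᵥ atilde := by
  have hinv : M_Δ⁻¹ * M_Δ = 1 :=
    Matrix.nonsing_inv_mul _ ((Matrix.isUnit_iff_isUnit_det M_Δ).mp hMΔunit)
  have hastar : M_Δ *ᵥ astar = f_s - h_Δ := eq_sub_of_add_eq houter
  have key : (M_p * M_Δ⁻¹) *ᵥ f_s = M_p *ᵥ astar + (M_p * M_Δ⁻¹) *ᵥ h_Δ := by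
    have : (M_p * M_Δ⁻¹) *ᵥ (f_s - h_Δ) = M_p *ᵥ astar := by
      rw [← hastar, Matrix.mulVec_mulVec, Matrix.mul_assoc,
        hinv, Matrix.mul_one]
    rw [Matrix.mulVec_sub] at this
    rw [← this]; abel
  have hfe : f_ext = M_p *ᵥ a + h_p + f_s := by rw [hpayload]; abel
  rw [hfe, hfstar, hatilde, Matrix.mulVec_sub, Matrix.add_mulVec, Matrix.one_mulVec, key]
  abel
end

section
/- Let n ≥ 1, let G_p, G_d, Δ_m be real n×n matrices, let A be the 2n×2n block matrix [[0, 1], [-G_p, -G_d]], let G = [G_p G_d] (n×2n), and let D be the 2n×n block matrix with upper block 0 and lower block the identity. Let P be a real symmetric positive definite 2n×2n matrix satisfying the Lyapunov equation P A + Aᵀ P = -1. Let z : ℝ → ℝ^{2n} be differentiable and satisfy ż(t) = A z(t) - D Δ_m G z(t) for all t. Then the function V(t) = z(t)ᵀ P z(t) satisfies V'(t) ≤ (-1 + 2 ‖G‖ λ_max(P) ‖Δ_m‖) ‖z(t)‖² for all t, where ‖·‖ denotes the Euclidean norm on vectors and the induced operator norm on matrices and λ_max(P) is the largest eigenvalue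 of P. -/
open Matrix
open scoped RealInnerProductSpace

/-- The operator norm of a real matrix induced by the Euclidean norm. -/
noncomputable def opNorm {m n : Type*} [Fintype m] [Fintype n] [DecidableEq n]
    (A : Matrix m n ℝ) : ℝ :=
  ‖LinearMap.toContinuousLinearMap (Matrix.toEuclideanLin A)‖

lemma inner_eq_dot {ι : Type*} [Fintype ι] (x y : EuclideanSpace ℝ ι) :
    ⟪x, y⟫ = (WithLp.equiv 2 (ι → ℝ) x) ⬝ᵥ (WithLp.equiv 2 (ι → ℝ) y) := by
  simp [PiLp.inner_apply, dotProduct, mul_comm]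

lemma toEuclideanLin_mul_apply {ι κ γ : Type*} [Fintype ι] [Fintype κ] [Fintype γ]
    [DecidableEq ι] [DecidableEq κ]
    (M : Matrix γ κ ℝ) (N : Matrix κ ι ℝ) (x : EuclideanSpace ℝ ι) :
    Matrix.toEuclideanLin (M * N) x = Matrix.toEuclideanLin M (Matrix.toEuclideanLin N x) := by
  simp [Matrix.toEuclideanLin_apply, Matrix.mulVec_mulVec]

lemma le_opNorm' {m n : Type*} [Fintype m] [Fintype n] [DecidableEq n]
    (M : Matrix m n ℝ) (x : EuclideanSpace ℝ n) :
    ‖Matrix.toEuclideanLin M x‖ ≤ opNorm M * ‖x‖ :=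
  (LinearMap.toContinuousLinearMap (Matrix.toEuclideanLin M)).le_opNorm x

lemma norm_fromRows01 {a b : Type*} [Fintype a] [Fintype b] [DecidableEq a]
    (v : EuclideanSpace ℝ a) :
    ‖Matrix.toEuclideanLin (Matrix.fromRows (0 : Matrix b a ℝ) (1 : Matrix a a ℝ)) v‖ = ‖v‖ := by
  rw [EuclideanSpace.norm_eq, EuclideanSpace.norm_eq]
  congr 1
  rw [Fintype.sum_sum_type]
  simp [Matrix.toEuclideanLin_apply, Matrix.mulVec, dotProduct, Matrix.fromRows_apply_inl,
    Matrix.fromRows_apply_inr, Matrix.one_apply, Finset.sum_ite_eq]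

lemma norm_toEuclideanLin_le {ι : Type*} [Fintype ι] [DecidableEq ι] [Nonempty ι]
    {P : Matrix ι ι ℝ} (hP : P.PosDef) (x : EuclideanSpace ℝ ι) :
    ‖Matrix.toEuclideanLin P x‖ ≤ (⨆ i, hP.isHermitian.eigenvalues i) * ‖x‖ := by
  set b := hP.isHermitian.eigenvectorBasis with hb
  set μ := hP.isHermitian.eigenvalues with hμ
  have hbdd : BddAbove (Set.range μ) := Set.Finite.bddAbove (Set.finite_range _)
  have hle : ∀ i, μ i ≤ ⨆ i, μ i := fun i => le_ciSup hbdd i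
  have hpos : ∀ i, 0 < μ i := hP.eigenvalues_pos
  have hlam0 : 0 ≤ ⨆ i, μ i := le_trans (hpos (Classical.arbitrary ι)).le (hle _)
  have hsym : (Matrix.toEuclideanLin P).IsSymmetric :=
    Matrix.isHermitian_iff_isSymmetric.mp hP.isHermitian
  have heig : ∀ i, Matrix.toEuclideanLin P (b i) = μ i • b i := by
    intro i
    have h := hP.isHermitian.mulVec_eigenvectorBasis i
    apply (WithLp.equiv 2 (ι → ℝ)).injective
    simpa [Matrix.toEuclideanLin_apply] using h
  have hrep : ∀ i, b.repr (Matrix.toEuclideanLin P x) i = μ i * b.repr x i := by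
    intro i
    rw [b.repr_apply_apply, b.repr_apply_apply, ← hsym (b i) x, heig i,
      real_inner_smul_left]
  have hnorm : ∀ v : EuclideanSpace ℝ ι, ‖v‖ ^ 2 = ∑ i, (b.repr v i) ^ 2 := by
    intro v
    rw [← b.repr.norm_map v, EuclideanSpace.norm_eq, Real.sq_sqrt (by positivity)]
    simp [sq_abs]
  have hsq : ‖Matrix.toEuclideanLin P x‖ ^ 2 ≤ ((⨆ i, μ i) * ‖x‖) ^ 2 := by
    rw [hnorm, mul_pow, hnorm x, Finset.mul_sum]
    apply Finset.sum_le_sum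
    intro i _
    rw [hrep i, mul_pow]
    have h2 : μ i ^ 2 ≤ (⨆ i, μ i) ^ 2 := pow_le_pow_left₀ (hpos i).le (hle i) 2
    exact mul_le_mul_of_nonneg_right h2 (sq_nonneg _)
  have h2 : (0:ℝ) ≤ ‖Matrix.toEuclideanLin P x‖ := norm_nonneg _
  nlinarith [mul_nonneg hlam0 (norm_nonneg x)]

lemma dot_identity {ι : Type*} [Fintype ι] (Pm Am Nm : Matrix ι ι ℝ)
    (hPs : Pmᵀ = Pm) (u : ι → ℝ) :
    ((Am *ᵥ u - Nm *ᵥ u) ⬝ᵥ (Pm *ᵥ u)) + (u ⬝ᵥ (Pm *ᵥ (Am *ᵥ u - Nm *ᵥ u)))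
      = u ⬝ᵥ ((Pm * Am + Amᵀ * Pm) *ᵥ u) - 2 * (u ⬝ᵥ (Pm *ᵥ (Nm *ᵥ u))) := by
  have h1 : ∀ v : ι → ℝ, v ⬝ᵥ (Pm *ᵥ u) = u ⬝ᵥ (Pm *ᵥ v) := by
    intro v
    rw [Matrix.dotProduct_mulVec, ← Matrix.mulVec_transpose, hPs, dotProduct_comm]
  have h2 : u ⬝ᵥ ((Amᵀ * Pm) *ᵥ u) = u ⬝ᵥ (Pm *ᵥ (Am *ᵥ u)) := by
    rw [← Matrix.mulVec_mulVec, Matrix.dotProduct_mulVec, Matrix.vecMul_transpose, h1]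
  rw [Matrix.add_mulVec, dotProduct_add, h2, ← Matrix.mulVec_mulVec,
    h1 (Am *ᵥ u - Nm *ᵥ u)]
  simp only [Matrix.mulVec_sub, dotProduct_sub]
  ring

lemma piLp_equiv_toEuclideanLin_apply' {m n : Type*} [Fintype m] [Fintype n] [DecidableEq n]
    (M : Matrix m n ℝ) (v : EuclideanSpace ℝ n) :
    WithLp.equiv 2 (m → ℝ) (Matrix.toEuclideanLin M v) = M *ᵥ WithLp.equiv 2 (n → ℝ) v := rfl

/-- The Lyapunov function `V = zᵀ P z` decreases along the perturbed closed-loop error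
system at rate `(-1 + 2‖G‖ λ_max(P) ‖Δ_m‖) ‖z‖²` (Appendix B of the paper). -/
theorem lyapunov_derivative_bound
    {n : ℕ} (hn : 1 ≤ n)
    (G_p G_d Δ_m : Matrix (Fin n) (Fin n) ℝ)
    (A : Matrix (Fin n ⊕ Fin n) (Fin n ⊕ Fin n) ℝ)
    (hA : A = Matrix.fromBlocks 0 1 (-G_p) (-G_d))
    (G : Matrix (Fin n) (Fin n ⊕ Fin n) ℝ) (hG : G = Matrix.fromCols G_p G_d)
    (D : Matrix (Fin n ⊕ Fin n) (Fin n) ℝ) (hD : D = Matrix.fromRows 0 1)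
    (P : Matrix (Fin n ⊕ Fin n) (Fin n ⊕ Fin n) ℝ)
    (hP : P.PosDef) (hLyap : P * A + Aᵀ * P = -1)
    (z : ℝ → EuclideanSpace ℝ (Fin n ⊕ Fin n))
    (hz : ∀ t, HasDerivAt z
      (Matrix.toEuclideanLin A (z t) - Matrix.toEuclideanLin (D * Δ_m * G) (z t)) t) :
    ∀ t, deriv (fun s => ⟪z s, Matrix.toEuclideanLin P (z s)⟫) t ≤
      (-1 + 2 * opNorm G * (⨆ i, hP.isHermitian.eigenvalues i) * opNorm Δ_m)
        * ‖z t‖ ^ 2 := by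
  intro t
  haveI : Nonempty (Fin n ⊕ Fin n) := ⟨Sum.inl ⟨0, hn⟩⟩
  set N : Matrix (Fin n ⊕ Fin n) (Fin n ⊕ Fin n) ℝ := D * Δ_m * G with hN
  set w : EuclideanSpace ℝ (Fin n ⊕ Fin n) :=
    Matrix.toEuclideanLin A (z t) - Matrix.toEuclideanLin N (z t) with hw
  set lam : ℝ := ⨆ i, hP.isHermitian.eigenvalues i with hlam
  -- derivative of V
  have hPz : HasDerivAt (fun s => Matrix.toEuclideanLin P (z s))
      (Matrix.toEuclideanLin P w) t := by
    have h := (LinearMap.toContinuousLinearMap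
        (Matrix.toEuclideanLin P)).hasFDerivAt.comp_hasDerivAt t (hz t)
    rw [hw, map_sub]
    simp [Function.comp] at h
    exact h
  have hV : HasDerivAt (fun s => ⟪z s, Matrix.toEuclideanLin P (z s)⟫)
      (⟪z t, Matrix.toEuclideanLin P w⟫ + ⟪w, Matrix.toEuclideanLin P (z t)⟫) t :=
    HasDerivAt.inner ℝ (hz t) hPz
  rw [hV.deriv]
  -- rewrite the derivative value via dot products
  set u : (Fin n ⊕ Fin n) → ℝ := WithLp.equiv 2 _ (z t) with hu
  have hPs : Pᵀ = P := by
    have := hP.isHermitian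
    rw [Matrix.IsHermitian, Matrix.conjTranspose_eq_transpose_of_trivial] at this
    exact this
  have hval : ⟪z t, Matrix.toEuclideanLin P w⟫ + ⟪w, Matrix.toEuclideanLin P (z t)⟫
      = -‖z t‖ ^ 2 - 2 * ⟪z t, Matrix.toEuclideanLin P (Matrix.toEuclideanLin N (z t))⟫ := by
    have hwu : WithLp.equiv 2 ((Fin n ⊕ Fin n) → ℝ) w = A *ᵥ u - N *ᵥ u := by
      simp [hw, hu, Matrix.toEuclideanLin_apply]
    have hid := dot_identity P A N hPs u
    have hzz : u ⬝ᵥ u = ‖z t‖ ^ 2 := by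
      rw [← inner_eq_dot, real_inner_self_eq_norm_sq]
    have h1 : u ⬝ᵥ ((P * A + Aᵀ * P) *ᵥ u) = -‖z t‖ ^ 2 := by
      rw [hLyap, Matrix.neg_mulVec, Matrix.one_mulVec, dotProduct_neg, hzz]
    have e1 : ⟪z t, Matrix.toEuclideanLin P w⟫ = u ⬝ᵥ (P *ᵥ (A *ᵥ u - N *ᵥ u)) := by
      rw [inner_eq_dot]
      simp only [piLp_equiv_toEuclideanLin_apply', ← hu, hwu]
    have e2 : ⟪w, Matrix.toEuclideanLin P (z t)⟫ = (A *ᵥ u - N *ᵥ u) ⬝ᵥ (P *ᵥ u) := by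
      rw [inner_eq_dot]
      simp only [piLp_equiv_toEuclideanLin_apply', ← hu, hwu]
    have e3 : ⟪z t, Matrix.toEuclideanLin P (Matrix.toEuclideanLin N (z t))⟫
        = u ⬝ᵥ (P *ᵥ (N *ᵥ u)) := by
      rw [inner_eq_dot]
      simp only [piLp_equiv_toEuclideanLin_apply', ← hu]
    rw [e1, e2, e3]
    linarith [hid, h1]
  rw [hval]
  -- bound the perturbation term
  have hlam0 : 0 ≤ lam := by
    have hbdd : BddAbove (Set.range hP.isHermitian.eigenvalues) :=
      Set.Finite.bddAbove (Set.finite_range _)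
    exact le_trans (hP.eigenvalues_pos (Classical.arbitrary _)).le
      (le_ciSup hbdd (Classical.arbitrary _))
  have hNz : ‖Matrix.toEuclideanLin N (z t)‖ ≤ opNorm Δ_m * (opNorm G * ‖z t‖) := by
    rw [hN, toEuclideanLin_mul_apply, toEuclideanLin_mul_apply, hD, norm_fromRows01]
    calc ‖Matrix.toEuclideanLin Δ_m (Matrix.toEuclideanLin G (z t))‖
        ≤ opNorm Δ_m * ‖Matrix.toEuclideanLin G (z t)‖ := le_opNorm' _ _
      _ ≤ opNorm Δ_m * (opNorm G * ‖z t‖) := by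
          have h0 : (0:ℝ) ≤ opNorm Δ_m := norm_nonneg _
          exact mul_le_mul_of_nonneg_left (le_opNorm' _ _) h0
  have hPNz : ‖Matrix.toEuclideanLin P (Matrix.toEuclideanLin N (z t))‖
      ≤ lam * (opNorm Δ_m * (opNorm G * ‖z t‖)) := by
    refine le_trans (norm_toEuclideanLin_le hP _) ?_
    exact mul_le_mul_of_nonneg_left hNz hlam0
  have hinner : -⟪z t, Matrix.toEuclideanLin P (Matrix.toEuclideanLin N (z t))⟫
      ≤ ‖z t‖ * (lam * (opNorm Δ_m * (opNorm G * ‖z t‖))) := by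
    refine le_trans (neg_le_abs _) (le_trans (abs_real_inner_le_norm _ _) ?_)
    exact mul_le_mul_of_nonneg_left hPNz (norm_nonneg _)
  nlinarith [norm_nonneg (z t)]
end

section
/- Let n ≥ 1, let G_p, G_d, Δ_m be real n×n matrices, let A be the 2n×2n block matrix [[0, 1], [-G_p, -G_d]], let G = [G_p G_d] (n×2n), and let D be the 2n×n block matrix with upper block 0 and lower block the identity. Let P be a real symmetric positive definite 2n×2n matrix satisfying P A + Aᵀ P = -1, and suppose ‖Δ_m‖ < 1/(2 ‖G‖ λ_max(P)). Then every differentiable solution z : [0,∞) → ℝ^{2n} of ż = A z - D Δ_m G z satisfies ‖z(t)‖ ≤ √(λ_max(P)/λ_min(P)) · ‖z(0)‖ · e^{-μ t} for all t ≥ 0, where μ = (1 - 2‖G‖ λ_max(P) ‖Δ_m‖)/(2 λ_max(P)) > 0; in particular the origin of the perturbed error system is globally exponentially stable. -/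
open Matrix

section Aux
open RealInnerProductSpace

set_option linter.unusedSectionVars false

variable {m n k : Type*} [Fintype m] [Fintype n] [Fintype k]

lemma aux_le_opNorm [DecidableEq n] (M : Matrix m n ℝ) (x : EuclideanSpace ℝ n) :
    ‖Matrix.toEuclideanLin M x‖ ≤ opNorm M * ‖x‖ :=
  (LinearMap.toContinuousLinearMap (Matrix.toEuclideanLin M)).le_opNorm x

lemma aux_transpose [DecidableEq m] [DecidableEq n] (M : Matrix m n ℝ)
    (x : EuclideanSpace ℝ n) (y : EuclideanSpace ℝ m) :
    ⟪Matrix.toEuclideanLin M x, y⟫ = ⟪x, Matrix.toEuclideanLin Mᵀ y⟫ := by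
  rw [← Matrix.conjTranspose_eq_transpose_of_trivial M,
    Matrix.toEuclideanLin_conjTranspose_eq_adjoint, LinearMap.adjoint_inner_right]

lemma aux_mul [DecidableEq n] [DecidableEq k] (M : Matrix m n ℝ) (N : Matrix n k ℝ)
    (x : EuclideanSpace ℝ k) :
    Matrix.toEuclideanLin (M * N) x = Matrix.toEuclideanLin M (Matrix.toEuclideanLin N x) := by
  simp [Matrix.toEuclideanLin_apply, Matrix.mulVec_mulVec]

variable [DecidableEq n] {P : Matrix n n ℝ}

lemma aux_eigBasis (hP : P.IsHermitian) (i : n) :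
    Matrix.toEuclideanLin P (hP.eigenvectorBasis i) =
      hP.eigenvalues i • hP.eigenvectorBasis i := by
  have := hP.mulVec_eigenvectorBasis i
  apply PiLp.ext
  intro j
  have := congrFun this j
  simpa [Matrix.toEuclideanLin_apply] using this

lemma aux_eigBasis_inner (hP : P.IsHermitian) (i : n) (y : EuclideanSpace ℝ n) :
    ⟪hP.eigenvectorBasis i, Matrix.toEuclideanLin P y⟫
      = hP.eigenvalues i * ⟪hP.eigenvectorBasis i, y⟫ := by
  rw [← LinearMap.adjoint_inner_left, ← Matrix.toEuclideanLin_conjTranspose_eq_adjoint,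
    hP.eq, aux_eigBasis hP, inner_smul_left]
  simp

lemma aux_quadForm (hP : P.IsHermitian) (x y : EuclideanSpace ℝ n) :
    ⟪x, Matrix.toEuclideanLin P y⟫ =
      ∑ i, hP.eigenvalues i * (⟪hP.eigenvectorBasis i, x⟫ * ⟪hP.eigenvectorBasis i, y⟫) := by
  rw [← OrthonormalBasis.sum_inner_mul_inner hP.eigenvectorBasis x (Matrix.toEuclideanLin P y)]
  refine Finset.sum_congr rfl fun i _ => ?_
  rw [aux_eigBasis_inner hP, real_inner_comm x]
  ring

lemma aux_normSq (hP : P.IsHermitian) (x : EuclideanSpace ℝ n) :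
    ‖x‖ ^ 2 = ∑ i, ⟪hP.eigenvectorBasis i, x⟫ ^ 2 := by
  rw [← real_inner_self_eq_norm_sq,
    ← OrthonormalBasis.sum_inner_mul_inner hP.eigenvectorBasis x x]
  refine Finset.sum_congr rfl fun i _ => ?_
  rw [real_inner_comm x]; ring

variable [Nonempty n] (hP : P.PosDef)

lemma aux_evle (i : n) : hP.isHermitian.eigenvalues i ≤ ⨆ j, hP.isHermitian.eigenvalues j :=
  le_ciSup (Set.Finite.bddAbove (Set.finite_range _)) i

lemma aux_lmin_pos : 0 < ⨅ j, hP.isHermitian.eigenvalues j := by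
  obtain ⟨i, hi⟩ := Finite.exists_min hP.isHermitian.eigenvalues
  exact lt_of_lt_of_le (hP.eigenvalues_pos i) (le_ciInf hi)

lemma aux_lmax_pos : 0 < ⨆ j, hP.isHermitian.eigenvalues j :=
  lt_of_lt_of_le (hP.eigenvalues_pos (Classical.arbitrary n)) (aux_evle hP _)

lemma aux_quadLB (x : EuclideanSpace ℝ n) :
    (⨅ j, hP.isHermitian.eigenvalues j) * ‖x‖ ^ 2 ≤ ⟪x, Matrix.toEuclideanLin P x⟫ := by
  rw [aux_quadForm hP.isHermitian, aux_normSq hP.isHermitian, Finset.mul_sum]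
  refine Finset.sum_le_sum fun i _ => ?_
  have h1 := ciInf_le (Set.Finite.bddBelow (Set.finite_range hP.isHermitian.eigenvalues)) i
  have h2 : (0:ℝ) ≤ ⟪hP.isHermitian.eigenvectorBasis i, x⟫ ^ 2 := sq_nonneg _
  nlinarith

lemma aux_quadUB (x : EuclideanSpace ℝ n) :
    ⟪x, Matrix.toEuclideanLin P x⟫ ≤ (⨆ j, hP.isHermitian.eigenvalues j) * ‖x‖ ^ 2 := by
  rw [aux_quadForm hP.isHermitian, aux_normSq hP.isHermitian, Finset.mul_sum]
  refine Finset.sum_le_sum fun i _ => ?_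
  have h1 := aux_evle hP i
  have h2 : (0:ℝ) ≤ ⟪hP.isHermitian.eigenvectorBasis i, x⟫ ^ 2 := sq_nonneg _
  nlinarith

lemma aux_normUB (x : EuclideanSpace ℝ n) :
    ‖Matrix.toEuclideanLin P x‖ ≤ (⨆ j, hP.isHermitian.eigenvalues j) * ‖x‖ := by
  have key : ‖Matrix.toEuclideanLin P x‖ ^ 2
      ≤ ((⨆ j, hP.isHermitian.eigenvalues j) * ‖x‖) ^ 2 := by
    rw [aux_normSq hP.isHermitian, mul_pow, aux_normSq hP.isHermitian x, Finset.mul_sum]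
    refine Finset.sum_le_sum fun i _ => ?_
    rw [aux_eigBasis_inner hP.isHermitian, mul_pow]
    exact mul_le_mul_of_nonneg_right
      (pow_le_pow_left₀ (hP.eigenvalues_pos i).le (aux_evle hP i) 2) (sq_nonneg _)
  have hnn : 0 ≤ (⨆ j, hP.isHermitian.eigenvalues j) * ‖x‖ :=
    mul_nonneg (aux_lmax_pos hP).le (norm_nonneg _)
  nlinarith [norm_nonneg (Matrix.toEuclideanLin P x)]

end Aux

lemma aux_Dnorm {n : ℕ} (x : EuclideanSpace ℝ (Fin n)) :
    ‖Matrix.toEuclideanLin (Matrix.fromRows (0 : Matrix (Fin n) (Fin n) ℝ)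
      (1 : Matrix (Fin n) (Fin n) ℝ)) x‖ = ‖x‖ := by
  rw [EuclideanSpace.norm_eq, EuclideanSpace.norm_eq]
  congr 1
  rw [Fintype.sum_sum_type]
  simp [Matrix.toEuclideanLin_apply, Matrix.fromRows_mulVec]

lemma aux_gronwall {V Vd : ℝ → ℝ} {c : ℝ}
    (hVd : ∀ t ∈ Set.Ici (0:ℝ), HasDerivWithinAt V (Vd t) (Set.Ici 0) t)
    (hle : ∀ t ∈ Set.Ici (0:ℝ), Vd t ≤ -c * V t) :
    ∀ t ≥ (0:ℝ), V t ≤ V 0 * Real.exp (-c * t) := by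
  intro t ht
  set g : ℝ → ℝ := fun t => V t * Real.exp (c * t) with hg
  have hgd : ∀ s ∈ Set.Ici (0:ℝ), HasDerivWithinAt g
      (Vd s * Real.exp (c * s) + V s * (Real.exp (c * s) * c)) (Set.Ici 0) s := by
    intro s hs
    have he : HasDerivWithinAt (fun t => Real.exp (c * t)) (Real.exp (c * s) * c)
        (Set.Ici 0) s := by
      simpa using (((hasDerivAt_id s).const_mul c).exp.hasDerivWithinAt (s := Set.Ici 0))
    exact (hVd s hs).mul he
  have hanti : AntitoneOn g (Set.Ici 0) := by
    apply antitoneOn_of_deriv_nonpos (convex_Ici 0)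
    · exact fun s hs => (hgd s hs).continuousWithinAt
    · intro s hs
      rw [interior_Ici] at hs
      exact ((hgd s (Set.mem_Ici.mpr (le_of_lt (Set.mem_Ioi.mp hs)))).hasDerivAt
        (Ici_mem_nhds hs)).differentiableAt.differentiableWithinAt
    · intro s hs
      rw [interior_Ici] at hs
      rw [((hgd s (Set.mem_Ici.mpr (le_of_lt (Set.mem_Ioi.mp hs)))).hasDerivAt (Ici_mem_nhds hs)).deriv]
      have h1 := hle s (Set.mem_Ici.mpr (le_of_lt (Set.mem_Ioi.mp hs)))
      have h2 := Real.exp_pos (c * s)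
      nlinarith
  have hgle : g t ≤ g 0 := hanti Set.self_mem_Ici ht ht
  simp only [hg, mul_zero, Real.exp_zero, mul_one] at hgle
  calc V t = V t * Real.exp (c * t) * Real.exp (-c * t) := by
        rw [mul_assoc, ← Real.exp_add]; ring_nf; simp
    _ ≤ V 0 * Real.exp (-c * t) := by
        have := Real.exp_pos (-c * t)
        nlinarith

set_option maxHeartbeats 800000 in
open RealInnerProductSpace in
/-- If `‖Δ_m‖ < 1/(2‖G‖λ_max(P))`, then every solution of the perturbed closed-loop
error system decays exponentially with rate `μ = (1 - 2‖G‖λ_max(P)‖Δ_m‖)/(2λ_max(P))`: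
the origin is globally exponentially stable. -/
theorem perturbed_system_globally_exponentially_stable
    {n : ℕ} (hn : 1 ≤ n)
    (G_p G_d Δ_m : Matrix (Fin n) (Fin n) ℝ)
    (A : Matrix (Fin n ⊕ Fin n) (Fin n ⊕ Fin n) ℝ)
    (hA : A = Matrix.fromBlocks 0 1 (-G_p) (-G_d))
    (G : Matrix (Fin n) (Fin n ⊕ Fin n) ℝ) (hG : G = Matrix.fromCols G_p G_d)
    (D : Matrix (Fin n ⊕ Fin n) (Fin n) ℝ) (hD : D = Matrix.fromRows 0 1)
    (P : Matrix (Fin n ⊕ Fin n) (Fin n ⊕ Fin n) ℝ)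
    (hP : P.PosDef) (hLyap : P * A + Aᵀ * P = -1)
    (hsmall : opNorm Δ_m < 1 / (2 * opNorm G * (⨆ i, hP.isHermitian.eigenvalues i)))
    (z : ℝ → EuclideanSpace ℝ (Fin n ⊕ Fin n))
    (hz : ∀ t ∈ Set.Ici (0 : ℝ), HasDerivWithinAt z
      (Matrix.toEuclideanLin A (z t) - Matrix.toEuclideanLin (D * Δ_m * G) (z t))
      (Set.Ici 0) t)
    (μ : ℝ)
    (hμ : μ = (1 - 2 * opNorm G * (⨆ i, hP.isHermitian.eigenvalues i) * opNorm Δ_m)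
      / (2 * (⨆ i, hP.isHermitian.eigenvalues i))) :
    0 < μ ∧ ∀ t ≥ (0 : ℝ),
      ‖z t‖ ≤ Real.sqrt ((⨆ i, hP.isHermitian.eigenvalues i)
          / (⨅ i, hP.isHermitian.eigenvalues i)) * ‖z 0‖ * Real.exp (-μ * t) := by
  have : NeZero n := ⟨by omega⟩
  haveI : Nonempty (Fin n ⊕ Fin n) := ⟨Sum.inl ⟨0, by omega⟩⟩
  set lmax := ⨆ i, hP.isHermitian.eigenvalues i with hlmax
  set lmin := ⨅ i, hP.isHermitian.eigenvalues i with hlmin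
  set V : ℝ → ℝ := fun t => ⟪z t, Matrix.toEuclideanLin P (z t)⟫ with hV
  set Vd : ℝ → ℝ := fun t =>
    ⟪z t, Matrix.toEuclideanLin P
      (Matrix.toEuclideanLin A (z t) - Matrix.toEuclideanLin (D * Δ_m * G) (z t))⟫
    + ⟪Matrix.toEuclideanLin A (z t) - Matrix.toEuclideanLin (D * Δ_m * G) (z t),
        Matrix.toEuclideanLin P (z t)⟫ with hVd
  have hlmaxpos : 0 < lmax := aux_lmax_pos hP
  have hlminpos : 0 < lmin := aux_lmin_pos hP
  have hΔnn : 0 ≤ opNorm Δ_m := norm_nonneg _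
  have hGnn : 0 ≤ opNorm G := norm_nonneg _
  have hGpos : 0 < opNorm G := by
    rcases hGnn.lt_or_eq with h | h
    · exact h
    · exfalso
      rw [← h] at hsmall
      simp at hsmall
      linarith
  have hX : (0:ℝ) < 2 * opNorm G * lmax := by positivity
  have hnum : 2 * opNorm G * lmax * opNorm Δ_m < 1 := by
    have := (lt_div_iff₀ hX).mp hsmall
    linarith
  have hμpos : 0 < μ := by
    rw [hμ]
    apply div_pos (by linarith) (by linarith)
  refine ⟨hμpos, ?_⟩
  have hμid : 2 * μ * lmax = 1 - 2 * opNorm G * lmax * opNorm Δ_m := by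
    rw [hμ]
    field_simp
  have hVderiv : ∀ t ∈ Set.Ici (0:ℝ), HasDerivWithinAt V (Vd t) (Set.Ici 0) t := by
    intro t ht
    have hTz : HasDerivWithinAt (fun s => Matrix.toEuclideanLin P (z s))
        (Matrix.toEuclideanLin P
          (Matrix.toEuclideanLin A (z t) - Matrix.toEuclideanLin (D * Δ_m * G) (z t)))
        (Set.Ici 0) t := by
      have hcont := (LinearMap.toContinuousLinearMap
        (Matrix.toEuclideanLin P)).hasFDerivAt (x := z t)
      exact hcont.comp_hasDerivWithinAt t (hz t ht)
    exact HasDerivWithinAt.inner ℝ (hz t ht) hTz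
  -- derivative bound
  have hVdle : ∀ t ∈ Set.Ici (0:ℝ), Vd t ≤ -(2*μ) * V t := by
    intro t ht
    have e1 : ⟪Matrix.toEuclideanLin A (z t), Matrix.toEuclideanLin P (z t)⟫
        = ⟪z t, Matrix.toEuclideanLin (Aᵀ * P) (z t)⟫ := by
      rw [aux_transpose, aux_mul]
    have e2 : ⟪z t, Matrix.toEuclideanLin P (Matrix.toEuclideanLin A (z t))⟫
        = ⟪z t, Matrix.toEuclideanLin (P * A) (z t)⟫ := by
      rw [aux_mul]
    have e3 : ⟪z t, Matrix.toEuclideanLin (P * A) (z t)⟫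
        + ⟪z t, Matrix.toEuclideanLin (Aᵀ * P) (z t)⟫ = -‖z t‖^2 := by
      rw [← inner_add_right, ← LinearMap.add_apply, ← map_add, hLyap]
      have hneg : Matrix.toEuclideanLin (-1 : Matrix (Fin n ⊕ Fin n) (Fin n ⊕ Fin n) ℝ) (z t)
          = -(z t) := by
        apply PiLp.ext; intro j
        simp [Matrix.toEuclideanLin_apply, Matrix.neg_mulVec]
      rw [hneg, inner_neg_right, real_inner_self_eq_norm_sq]
    have hpert : ‖Matrix.toEuclideanLin (D * Δ_m * G) (z t)‖
        ≤ opNorm Δ_m * opNorm G * ‖z t‖ := by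
      rw [mul_assoc, aux_mul, aux_mul, hD, aux_Dnorm]
      have h1 := aux_le_opNorm Δ_m (Matrix.toEuclideanLin G (z t))
      have h2 := aux_le_opNorm G (z t)
      linarith only [h1, mul_le_mul_of_nonneg_left h2 hΔnn]
    have hp1 : |⟪z t, Matrix.toEuclideanLin P (Matrix.toEuclideanLin (D * Δ_m * G) (z t))⟫|
        ≤ lmax * (opNorm Δ_m * opNorm G) * ‖z t‖^2 := by
      calc |⟪z t, Matrix.toEuclideanLin P (Matrix.toEuclideanLin (D * Δ_m * G) (z t))⟫|
          ≤ ‖z t‖ * ‖Matrix.toEuclideanLin P (Matrix.toEuclideanLin (D * Δ_m * G) (z t))‖ :=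
            abs_real_inner_le_norm _ _
        _ ≤ ‖z t‖ * (lmax * ‖Matrix.toEuclideanLin (D * Δ_m * G) (z t)‖) :=
            mul_le_mul_of_nonneg_left (aux_normUB hP _) (norm_nonneg _)
        _ ≤ ‖z t‖ * (lmax * (opNorm Δ_m * opNorm G * ‖z t‖)) :=
            mul_le_mul_of_nonneg_left
              (mul_le_mul_of_nonneg_left hpert hlmaxpos.le) (norm_nonneg _)
        _ = lmax * (opNorm Δ_m * opNorm G) * ‖z t‖^2 := by ring
    have hp2 : ⟪Matrix.toEuclideanLin (D * Δ_m * G) (z t), Matrix.toEuclideanLin P (z t)⟫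
        = ⟪z t, Matrix.toEuclideanLin P (Matrix.toEuclideanLin (D * Δ_m * G) (z t))⟫ := by
      have hPt : Pᵀ = P := by
        rw [← Matrix.conjTranspose_eq_transpose_of_trivial]; exact hP.isHermitian.eq
      rw [real_inner_comm, aux_transpose, hPt]
    obtain ⟨b, hb⟩ : ∃ b : ℝ,
        b = ⟪z t, Matrix.toEuclideanLin P (Matrix.toEuclideanLin (D * Δ_m * G) (z t))⟫ :=
      ⟨_, rfl⟩
    rw [← hb] at hp1 hp2
    have hVdeq : Vd t = -‖z t‖^2 - 2 * b := by
      have expand : Vd t =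
          (⟪z t, Matrix.toEuclideanLin P (Matrix.toEuclideanLin A (z t))⟫
            - ⟪z t, Matrix.toEuclideanLin P (Matrix.toEuclideanLin (D * Δ_m * G) (z t))⟫)
          + (⟪Matrix.toEuclideanLin A (z t), Matrix.toEuclideanLin P (z t)⟫
            - ⟪Matrix.toEuclideanLin (D * Δ_m * G) (z t), Matrix.toEuclideanLin P (z t)⟫) := by
        simp only [hVd, map_sub, inner_sub_right, inner_sub_left]
      rw [expand, ← hb, e1, e2, hp2]
      linarith only [e3]
    have hVub : V t ≤ lmax * ‖z t‖^2 := aux_quadUB hP (z t)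
    have habs := abs_le.mp hp1
    rw [hVdeq]
    have hconst : -(2*μ*lmax) = -1 + 2*opNorm G*lmax*opNorm Δ_m := by linarith [hμid]
    have h1 : -‖z t‖^2 - 2*b ≤ (-(2*μ*lmax))*‖z t‖^2 := by
      rw [hconst]; linarith only [habs.1]
    have h2 : (-(2*μ*lmax))*‖z t‖^2 ≤ -(2*μ) * V t := by
      linarith only [mul_nonneg hμpos.le (sub_nonneg.mpr hVub)]
    linarith only [h1, h2]
  -- Gronwall
  have hVdecay := aux_gronwall hVderiv hVdle
  intro t ht
  have hVt := hVdecay t ht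
  have hLB : lmin * ‖z t‖^2 ≤ V t := aux_quadLB hP (z t)
  have hUB : V 0 ≤ lmax * ‖z 0‖^2 := aux_quadUB hP (z 0)
  have hexp : (0:ℝ) < Real.exp (-(2*μ) * t) := Real.exp_pos _
  have hsq : ‖z t‖^2 ≤ (lmax / lmin) * ‖z 0‖^2 * Real.exp (-(2*μ) * t) := by
    rw [div_mul_eq_mul_div, div_mul_eq_mul_div, le_div_iff₀ hlminpos]
    linarith only [hLB, hVt, mul_le_mul_of_nonneg_right hUB hexp.le]
  have hexpsq : Real.exp (-(2*μ) * t) = Real.exp (-μ * t) ^ 2 := by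
    rw [← Real.exp_nat_mul]; congr 1; push_cast; ring
  set R := Real.sqrt (lmax / lmin) * ‖z 0‖ * Real.exp (-μ * t) with hR
  have hRnn : 0 ≤ R := by positivity
  have hRsq : R^2 = (lmax / lmin) * ‖z 0‖^2 * Real.exp (-(2*μ) * t) := by
    rw [hR, hexpsq, mul_pow, mul_pow, Real.sq_sqrt (by positivity)]
  have hfin : ‖z t‖^2 ≤ R^2 := by rw [hRsq]; exact hsq
  calc ‖z t‖ = Real.sqrt (‖z t‖^2) := (Real.sqrt_sq (norm_nonneg _)).symm
    _ ≤ Real.sqrt (R^2) := Real.sqrt_le_sqrt hfin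
    _ = R := Real.sqrt_sq hRnn
end

section
/- Let m, n ≥ 1, let A be a real m×m matrix, D a real m×n matrix, and P a real symmetric positive definite m×m matrix satisfying P A + Aᵀ P = -1. Let η : ℝ → ℝⁿ, let ρ > 0, and let z : ℝ → ℝ^m be differentiable satisfying ż(t) = A z(t) + D(η(t) - w(t)) where w(t) = ρ · Dᵀ P z(t)/‖Dᵀ P z(t)‖ whenever Dᵀ P z(t) ≠ 0. Then at every time t with Dᵀ P z(t) ≠ 0, the function V(t) = z(t)ᵀ P z(t) satisfies V'(t) ≤ -‖z(t)‖² + 2 ‖Dᵀ P z(t)‖ (‖η(t)‖ - ρ). In particular, if ρ ≥ ‖η(t)‖ for all t, then V'(t) ≤ -‖z(t)‖² at all such times. -/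
open Matrix
open scoped RealInnerProductSpace

lemma toEuclideanLin_transpose_inner {m n : ℕ} (M : Matrix (Fin m) (Fin n) ℝ)
    (x : EuclideanSpace ℝ (Fin n)) (y : EuclideanSpace ℝ (Fin m)) :
    ⟪Matrix.toEuclideanLin M x, y⟫ = ⟪x, Matrix.toEuclideanLin Mᵀ y⟫ := by
  have h : (Mᵀ : Matrix (Fin n) (Fin m) ℝ) = Mᴴ := by
    ext i j; simp [Matrix.conjTranspose]
  rw [h, Matrix.toEuclideanLin_conjTranspose_eq_adjoint,
    LinearMap.adjoint_inner_right]

lemma toEuclideanLin_mul_apply_s15 {m n p : ℕ} (M : Matrix (Fin m) (Fin n) ℝ)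
    (N : Matrix (Fin n) (Fin p) ℝ) (x : EuclideanSpace ℝ (Fin p)) :
    Matrix.toEuclideanLin (M * N) x
      = Matrix.toEuclideanLin M (Matrix.toEuclideanLin N x) := by
  ext i
  simp [Matrix.toEuclideanLin_apply, Matrix.mulVec_mulVec]


/-- Lyapunov decrease property of the discontinuous robust (unit-vector) control input:
whenever `Dᵀ P z ≠ 0`, the derivative of `V = zᵀ P z` satisfies
`V' ≤ -‖z‖² + 2‖Dᵀ P z‖(‖η‖ - ρ)`; in particular, if `ρ ≥ ‖η‖` then `V' ≤ -‖z‖²`. -/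
theorem robust_control_lyapunov_decrease
    {m n : ℕ} (hm : 1 ≤ m) (hn : 1 ≤ n)
    (A : Matrix (Fin m) (Fin m) ℝ) (D : Matrix (Fin m) (Fin n) ℝ)
    (P : Matrix (Fin m) (Fin m) ℝ) (hP : P.PosDef)
    (hLyap : P * A + Aᵀ * P = -1)
    (η : ℝ → EuclideanSpace ℝ (Fin n)) (ρ : ℝ) (hρ : 0 < ρ)
    (z : ℝ → EuclideanSpace ℝ (Fin m))
    (w : ℝ → EuclideanSpace ℝ (Fin n))
    (hw : ∀ t, Matrix.toEuclideanLin (Dᵀ * P) (z t) ≠ 0 →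
      w t = (ρ / ‖Matrix.toEuclideanLin (Dᵀ * P) (z t)‖) •
        Matrix.toEuclideanLin (Dᵀ * P) (z t))
    (hz : ∀ t, HasDerivAt z
      (Matrix.toEuclideanLin A (z t) + Matrix.toEuclideanLin D (η t - w t)) t) :
    (∀ t, Matrix.toEuclideanLin (Dᵀ * P) (z t) ≠ 0 →
      deriv (fun s => ⟪z s, Matrix.toEuclideanLin P (z s)⟫) t ≤
        -‖z t‖ ^ 2 + 2 * ‖Matrix.toEuclideanLin (Dᵀ * P) (z t)‖ * (‖η t‖ - ρ)) ∧
    ((∀ t, ρ ≥ ‖η t‖) → ∀ t, Matrix.toEuclideanLin (Dᵀ * P) (z t) ≠ 0 →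
      deriv (fun s => ⟪z s, Matrix.toEuclideanLin P (z s)⟫) t ≤ -‖z t‖ ^ 2) := by
  have hPT : Pᵀ = P := by
    have hh := hP.1
    rw [Matrix.IsHermitian] at hh
    calc Pᵀ = Pᴴ := by ext i j; simp [Matrix.conjTranspose]
    _ = P := hh
  have key : ∀ t, Matrix.toEuclideanLin (Dᵀ * P) (z t) ≠ 0 →
      deriv (fun s => ⟪z s, Matrix.toEuclideanLin P (z s)⟫) t ≤
        -‖z t‖ ^ 2 + 2 * ‖Matrix.toEuclideanLin (Dᵀ * P) (z t)‖ * (‖η t‖ - ρ) := by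
    intro t hq
    set q := Matrix.toEuclideanLin (Dᵀ * P) (z t) with hqdef
    set v := η t - w t with hv
    set z' := Matrix.toEuclideanLin A (z t) + Matrix.toEuclideanLin D v with hz'
    have hPz : HasDerivAt (fun s => Matrix.toEuclideanLin P (z s))
        (Matrix.toEuclideanLin P z') t :=
      (LinearMap.toContinuousLinearMap
        (Matrix.toEuclideanLin P)).hasFDerivAt.comp_hasDerivAt t (hz t)
    have hV : HasDerivAt (fun s => ⟪z s, Matrix.toEuclideanLin P (z s)⟫)
        (⟪z t, Matrix.toEuclideanLin P z'⟫ + ⟪z', Matrix.toEuclideanLin P (z t)⟫) t :=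
      (hz t).inner ℝ hPz
    rw [hV.deriv]
    have hqz : q = Matrix.toEuclideanLin Dᵀ (Matrix.toEuclideanLin P (z t)) := by
      rw [hqdef, toEuclideanLin_mul_apply_s15]
    -- A-part
    have hA1 : ⟪Matrix.toEuclideanLin A (z t), Matrix.toEuclideanLin P (z t)⟫
        = ⟪z t, Matrix.toEuclideanLin (Aᵀ * P) (z t)⟫ := by
      rw [toEuclideanLin_transpose_inner, toEuclideanLin_mul_apply_s15]
    have hA2 : ⟪z t, Matrix.toEuclideanLin P (Matrix.toEuclideanLin A (z t))⟫
        = ⟪z t, Matrix.toEuclideanLin (P * A) (z t)⟫ := by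
      rw [toEuclideanLin_mul_apply_s15]
    have hAsum : ⟪z t, Matrix.toEuclideanLin (Aᵀ * P) (z t)⟫
        + ⟪z t, Matrix.toEuclideanLin (P * A) (z t)⟫ = -‖z t‖ ^ 2 := by
      rw [← inner_add_right, ← LinearMap.add_apply, ← map_add, add_comm (Aᵀ * P), hLyap]
      have h1 : Matrix.toEuclideanLin (-1 : Matrix (Fin m) (Fin m) ℝ) (z t) = -(z t) := by
        ext i
        simp [Matrix.toEuclideanLin_apply]
      rw [h1, inner_neg_right, real_inner_self_eq_norm_sq]
    -- D-part
    have hD1 : ⟪Matrix.toEuclideanLin D v, Matrix.toEuclideanLin P (z t)⟫ = ⟪v, q⟫ := by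
      rw [hqz]
      exact toEuclideanLin_transpose_inner D v (Matrix.toEuclideanLin P (z t))
    have hD2 : ⟪z t, Matrix.toEuclideanLin P (Matrix.toEuclideanLin D v)⟫ = ⟪v, q⟫ := by
      rw [hqz, real_inner_comm, toEuclideanLin_transpose_inner P, hPT,
        toEuclideanLin_transpose_inner D]
    have hexp : ⟪z t, Matrix.toEuclideanLin P z'⟫ + ⟪z', Matrix.toEuclideanLin P (z t)⟫
        = -‖z t‖ ^ 2 + 2 * ⟪v, q⟫ := by
      rw [hz', inner_add_left, map_add, inner_add_right, hA1, hA2, hD1, hD2]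
      linarith [hAsum]
    rw [hexp]
    have hqn : (0:ℝ) < ‖q‖ := norm_pos_iff.mpr hq
    have hvq : ⟪v, q⟫ = ⟪η t, q⟫ - ρ * ‖q‖ := by
      rw [hv, inner_sub_left, hw t hq, real_inner_smul_left, real_inner_self_eq_norm_sq]
      field_simp
      ring
    have hbound : ⟪η t, q⟫ ≤ ‖η t‖ * ‖q‖ := real_inner_le_norm _ _
    have h3 : ⟪v, q⟫ ≤ ‖q‖ * (‖η t‖ - ρ) := by rw [hvq]; nlinarith [hbound]
    nlinarith [h3]
  refine ⟨key, fun hρη t hq => ?_⟩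
  have hk := key t hq
  have h2 : 2 * ‖Matrix.toEuclideanLin (Dᵀ * P) (z t)‖ * (‖η t‖ - ρ) ≤ 0 := by
    have hg := hρη t
    have hle : ‖η t‖ - ρ ≤ 0 := by linarith
    have hn0 : (0:ℝ) ≤ ‖Matrix.toEuclideanLin (Dᵀ * P) (z t)‖ := norm_nonneg _
    nlinarith
  linarith
end

section
/- Let Δ, M̃_t, M_t, M̂_t, M_d, G be real matrices (with M_t and M_d invertible, G of size n×2n) and let f, h_d, h̃ ∈ ℝⁿ, z ∈ ℝ^{2n}, w ∈ ℝⁿ. Suppose ‖f‖ ≤ c_f, ‖h_d‖ ≤ c_d, ‖h̃‖ ≤ c_t, ‖w‖ ≤ ρ, and ‖1 - Δ M_t⁻¹ M̂_t‖ ≤ α with α < 1. Define η = Δ M̃_t M_d⁻¹ (f - h_d) - Δ M_t⁻¹ h̃ + (1 - Δ M_t⁻¹ M̂_t)(G z + w). If ρ ≥ (1/(1-α)) · ( ‖Δ M̃_t M_d⁻¹‖ (c_f + c_d) + ‖Δ M_t⁻¹‖ c_t + α ‖G‖ ‖z‖ ), then ‖η‖ ≤ ρ. -/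
open Matrix

lemma opNorm_apply_le {m n : Type*} [Fintype m] [Fintype n] [DecidableEq n]
    (A : Matrix m n ℝ) (x : EuclideanSpace ℝ n) :
    ‖Matrix.toEuclideanLin A x‖ ≤ opNorm A * ‖x‖ :=
  (LinearMap.toContinuousLinearMap (Matrix.toEuclideanLin A)).le_opNorm x

/-- Choice of the robust-control gain `ρ` dominating the lumped uncertainty `η`
(Appendix C of the paper). -/
theorem uncertainty_bound
    {n : ℕ} (hn : 1 ≤ n)
    (Δ Mtil_t M_t Mhat_t M_d : Matrix (Fin n) (Fin n) ℝ)
    (hMt : IsUnit M_t) (hMd : IsUnit M_d)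
    (G : Matrix (Fin n) (Fin n ⊕ Fin n) ℝ)
    (f h_d htil : EuclideanSpace ℝ (Fin n))
    (z : EuclideanSpace ℝ (Fin n ⊕ Fin n))
    (w : EuclideanSpace ℝ (Fin n))
    (c_f c_d c_t ρ α : ℝ)
    (hf : ‖f‖ ≤ c_f) (hhd : ‖h_d‖ ≤ c_d) (hht : ‖htil‖ ≤ c_t)
    (hw : ‖w‖ ≤ ρ)
    (hα : opNorm (1 - Δ * M_t⁻¹ * Mhat_t) ≤ α) (hα1 : α < 1)
    (η : EuclideanSpace ℝ (Fin n))
    (hη : η = Matrix.toEuclideanLin (Δ * Mtil_t * M_d⁻¹) (f - h_d)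
      - Matrix.toEuclideanLin (Δ * M_t⁻¹) htil
      + Matrix.toEuclideanLin (1 - Δ * M_t⁻¹ * Mhat_t)
          (Matrix.toEuclideanLin G z + w))
    (hρ : ρ ≥ (1 / (1 - α)) * (opNorm (Δ * Mtil_t * M_d⁻¹) * (c_f + c_d)
      + opNorm (Δ * M_t⁻¹) * c_t + α * opNorm G * ‖z‖)) :
    ‖η‖ ≤ ρ := by
  have b1 := opNorm_apply_le (Δ * Mtil_t * M_d⁻¹) (f - h_d)
  have b2 := opNorm_apply_le (Δ * M_t⁻¹) htil
  have b3 := opNorm_apply_le (1 - Δ * M_t⁻¹ * Mhat_t) (Matrix.toEuclideanLin G z + w)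
  have b4 := opNorm_apply_le G z
  have hfd : ‖f - h_d‖ ≤ c_f + c_d := (norm_sub_le _ _).trans (by linarith)
  have hGw : ‖Matrix.toEuclideanLin G z + w‖ ≤ opNorm G * ‖z‖ + ρ :=
    (norm_add_le _ _).trans (by linarith)
  have hN1 : (0:ℝ) ≤ opNorm (Δ * Mtil_t * M_d⁻¹) := norm_nonneg _
  have hN2 : (0:ℝ) ≤ opNorm (Δ * M_t⁻¹) := norm_nonneg _
  have hNa : (0:ℝ) ≤ opNorm (1 - Δ * M_t⁻¹ * Mhat_t) := norm_nonneg _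
  have hNG : (0:ℝ) ≤ opNorm G := norm_nonneg _
  have hz : (0:ℝ) ≤ ‖z‖ := norm_nonneg _
  have hρ0 : (0:ℝ) ≤ ρ := le_trans (norm_nonneg w) hw
  have hα0 : (0:ℝ) ≤ α := le_trans hNa hα
  have h3 : ‖Matrix.toEuclideanLin (1 - Δ * M_t⁻¹ * Mhat_t)
      (Matrix.toEuclideanLin G z + w)‖ ≤ α * (opNorm G * ‖z‖ + ρ) := by
    refine b3.trans ?_
    have := norm_nonneg (Matrix.toEuclideanLin G z + w)
    nlinarith
  have hηle : ‖η‖ ≤ opNorm (Δ * Mtil_t * M_d⁻¹) * (c_f + c_d)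
      + opNorm (Δ * M_t⁻¹) * c_t + α * (opNorm G * ‖z‖ + ρ) := by
    rw [hη]
    calc ‖_ - _ + _‖ ≤ ‖Matrix.toEuclideanLin (Δ * Mtil_t * M_d⁻¹) (f - h_d)
          - Matrix.toEuclideanLin (Δ * M_t⁻¹) htil‖
          + ‖Matrix.toEuclideanLin (1 - Δ * M_t⁻¹ * Mhat_t)
              (Matrix.toEuclideanLin G z + w)‖ := norm_add_le _ _
      _ ≤ ‖Matrix.toEuclideanLin (Δ * Mtil_t * M_d⁻¹) (f - h_d)‖
          + ‖Matrix.toEuclideanLin (Δ * M_t⁻¹) htil‖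
          + ‖Matrix.toEuclideanLin (1 - Δ * M_t⁻¹ * Mhat_t)
              (Matrix.toEuclideanLin G z + w)‖ := by
            have := norm_sub_le (Matrix.toEuclideanLin (Δ * Mtil_t * M_d⁻¹) (f - h_d))
              (Matrix.toEuclideanLin (Δ * M_t⁻¹) htil)
            linarith
      _ ≤ _ := by
            have hfn : ‖f‖ - 0 ≤ c_f := by simpa using hf
            have hfd0 : (0:ℝ) ≤ ‖f - h_d‖ := norm_nonneg _
            have hht0 : (0:ℝ) ≤ ‖htil‖ := norm_nonneg _
            nlinarith
  have hfinal : opNorm (Δ * Mtil_t * M_d⁻¹) * (c_f + c_d)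
      + opNorm (Δ * M_t⁻¹) * c_t + α * opNorm G * ‖z‖ ≤ (1 - α) * ρ := by
    have h1α : (0:ℝ) < 1 - α := by linarith
    rw [ge_iff_le, div_mul_eq_mul_div, div_le_iff₀ h1α, one_mul] at hρ
    linarith
  linarith [hηle, hfinal]
end

section
/- Let n ≥ 1 and let G_p and G_d be real symmetric positive definite n×n matrices. Let A be the 2n×2n block matrix [[0, 1], [-G_p, -G_d]]. Then A is Hurwitz: every complex eigenvalue λ of A (i.e., every root of the characteristic polynomial of A over ℂ) satisfies Re(λ) < 0. -/
open Matrix Polynomial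

lemma quad_form_complexify {n : ℕ} (G : Matrix (Fin n) (Fin n) ℝ) (hG : G.PosDef)
    (x : Fin n → ℂ) (hx : x ≠ 0) :
    ∃ c : ℝ, 0 < c ∧ star x ⬝ᵥ ((G.map (algebraMap ℝ ℂ)) *ᵥ x) = (c : ℂ) := by
  classical
  set f := algebraMap ℝ ℂ with hf
  set a : Fin n → ℝ := fun i => (x i).re with ha
  set b : Fin n → ℝ := fun i => (x i).im with hb
  have hxab : x = (f ∘ a) + Complex.I • (f ∘ b) := by
    funext i
    simp [ha, hb, hf, Complex.ext_iff, Complex.mul_re, Complex.mul_im]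
  have hstar : star x = (f ∘ a) - Complex.I • (f ∘ b) := by
    funext i
    simp [ha, hb, hf, Complex.ext_iff, star, Complex.mul_re, Complex.mul_im]
  have hmv : ∀ u : Fin n → ℝ, (G.map f) *ᵥ (f ∘ u) = f ∘ (G *ᵥ u) := by
    intro u; funext i
    exact (RingHom.map_mulVec f G u i).symm
  have hdp : ∀ u w : Fin n → ℝ, (f ∘ u) ⬝ᵥ (f ∘ w) = f (u ⬝ᵥ w) := by
    intro u w; exact (RingHom.map_dotProduct f u w).symm
  have hsym : Gᵀ = G := hG.isHermitian
  have hswap : a ⬝ᵥ (G *ᵥ b) = b ⬝ᵥ (G *ᵥ a) := by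
    rw [Matrix.dotProduct_mulVec, ← Matrix.mulVec_transpose, hsym, dotProduct_comm]
  refine ⟨a ⬝ᵥ (G *ᵥ a) + b ⬝ᵥ (G *ᵥ b), ?_, ?_⟩
  · have hab : a ≠ 0 ∨ b ≠ 0 := by
      by_contra h
      push_neg at h
      apply hx
      rw [hxab, h.1, h.2]
      funext i; simp
    have hnn1 : 0 ≤ a ⬝ᵥ (G *ᵥ a) := by
      have := hG.posSemidef.dotProduct_mulVec_nonneg a; simpa using this
    have hnn2 : 0 ≤ b ⬝ᵥ (G *ᵥ b) := by
      have := hG.posSemidef.dotProduct_mulVec_nonneg b; simpa using this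
    rcases hab with h | h
    · have := hG.dotProduct_mulVec_pos h; simp at this; linarith
    · have := hG.dotProduct_mulVec_pos h; simp at this; linarith
  · rw [hstar]
    conv_lhs => rw [hxab]
    rw [Matrix.mulVec_add, Matrix.mulVec_smul, hmv, hmv,
      sub_dotProduct, dotProduct_add, dotProduct_add,
      smul_dotProduct, smul_dotProduct, dotProduct_smul,
      dotProduct_smul, hdp, hdp, hdp, hdp, hswap]
    simp only [smul_eq_mul]
    push_cast
    ring_nf
    simp [Complex.I_sq]
    simp [hf, Complex.coe_algebraMap]

/-- The closed-loop matrix `A = [[0, 1], [-G_p, -G_d]]` with symmetric positive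
definite gains `G_p`, `G_d` is Hurwitz: every complex eigenvalue has negative real
part. -/
theorem closed_loop_matrix_hurwitz
    {n : ℕ} (hn : 1 ≤ n)
    (G_p G_d : Matrix (Fin n) (Fin n) ℝ)
    (hGp : G_p.PosDef) (hGd : G_d.PosDef)
    (A : Matrix (Fin n ⊕ Fin n) (Fin n ⊕ Fin n) ℝ)
    (hA : A = Matrix.fromBlocks 0 1 (-G_p) (-G_d)) :
    ∀ lam ∈ ((A.map (algebraMap ℝ ℂ)).charpoly).roots, lam.re < 0 := by
  classical
  intro lam hlam
  subst hA
  set f := algebraMap ℝ ℂ with hf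
  set M := (Matrix.fromBlocks (0 : Matrix (Fin n) (Fin n) ℝ) 1 (-G_p) (-G_d)).map f with hM
  have hroot : M.charpoly.eval lam = 0 := by
    have := Polynomial.isRoot_of_mem_roots hlam
    exact this
  have hdet : (lam • (1 : Matrix (Fin n ⊕ Fin n) (Fin n ⊕ Fin n) ℂ) - M).det = 0 := by
    have h1 : lam • (1 : Matrix (Fin n ⊕ Fin n) (Fin n ⊕ Fin n) ℂ) - M
        = (charmatrix M).map (Polynomial.evalRingHom lam) := by
      ext i j
      by_cases h : i = j
      · subst h; simp [charmatrix_apply_eq]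
      · simp [charmatrix_apply_ne _ _ _ h, Matrix.one_apply_ne h]
    rw [h1, ← RingHom.mapMatrix_apply, ← RingHom.map_det]
    exact hroot
  obtain ⟨v, hv0, hv⟩ := Matrix.exists_mulVec_eq_zero_iff.2 hdet
  have hMv : M *ᵥ v = lam • v := by
    have h2 : M *ᵥ v - lam • v = 0 := by
      rw [Matrix.sub_mulVec, Matrix.smul_mulVec, Matrix.one_mulVec] at hv
      linear_combination (norm := module) -hv
    have := sub_eq_zero.mp h2
    exact this
  set x : Fin n → ℂ := fun i => v (Sum.inl i) with hx
  set y : Fin n → ℂ := fun i => v (Sum.inr i) with hy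
  have hMblocks : M = Matrix.fromBlocks 0 1 (-(G_p.map f)) (-(G_d.map f)) := by
    rw [hM]
    ext (i | i) (j | j) <;> simp [Matrix.one_apply, apply_ite f]
  have htop : ∀ i, y i = lam * x i := by
    intro i
    have := congrFun hMv (Sum.inl i)
    rw [hMblocks] at this
    simpa [Matrix.fromBlocks_mulVec, Matrix.one_mulVec, hx, hy] using this
  have hyx : y = lam • x := funext fun i => by simp [htop i, Pi.smul_apply]
  have hbot : ∀ i, -((G_p.map f) *ᵥ x) i - ((G_d.map f) *ᵥ y) i = lam * y i := by
    intro i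
    have := congrFun hMv (Sum.inr i)
    rw [hMblocks] at this
    simpa [Matrix.fromBlocks_mulVec, Matrix.neg_mulVec, hx, hy, sub_eq_add_neg, Function.comp_def] using this
  have hxne : x ≠ 0 := by
    intro hx0
    apply hv0
    funext i
    cases i with
    | inl i => exact congrFun hx0 i
    | inr i =>
        show y i = 0
        rw [hyx, hx0]
        simp
  have hvec : ∀ i, ((G_p.map f) *ᵥ x) i + lam * ((G_d.map f) *ᵥ x) i + lam ^ 2 * x i = 0 := by
    intro i
    have h1 := hbot i
    have h2 : ((G_d.map f) *ᵥ y) i = lam * ((G_d.map f) *ᵥ x) i := by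
      rw [hyx, Matrix.mulVec_smul]; simp
    rw [h2, htop i] at h1
    linear_combination -h1
  obtain ⟨γ, hγ, hγeq⟩ := quad_form_complexify G_p hGp x hxne
  obtain ⟨β, hβ, hβeq⟩ := quad_form_complexify G_d hGd x hxne
  obtain ⟨α, hα, hαeq⟩ := quad_form_complexify 1 Matrix.PosDef.one x hxne
  have hone : (1 : Matrix (Fin n) (Fin n) ℝ).map (algebraMap ℝ ℂ) = 1 := by
    ext i j; by_cases h : i = j <;> simp [Matrix.one_apply, h]
  have hαeq' : star x ⬝ᵥ x = (α : ℂ) := by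
    rw [hone, Matrix.one_mulVec] at hαeq
    exact hαeq
  have heq : (γ : ℂ) + lam * β + lam ^ 2 * α = 0 := by
    have h3 : star x ⬝ᵥ (fun i => ((G_p.map f) *ᵥ x) i + lam * ((G_d.map f) *ᵥ x) i
        + lam ^ 2 * x i) = 0 := by
      have : (fun i => ((G_p.map f) *ᵥ x) i + lam * ((G_d.map f) *ᵥ x) i + lam ^ 2 * x i)
          = (0 : Fin n → ℂ) := funext hvec
      rw [this, dotProduct_zero]
    calc (γ : ℂ) + lam * β + lam ^ 2 * α
        = star x ⬝ᵥ ((G_p.map f) *ᵥ x) + lam * (star x ⬝ᵥ ((G_d.map f) *ᵥ x))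
          + lam ^ 2 * (star x ⬝ᵥ x) := by rw [hγeq, hβeq, hαeq']
      _ = star x ⬝ᵥ (fun i => ((G_p.map f) *ᵥ x) i + lam * ((G_d.map f) *ᵥ x) i
          + lam ^ 2 * x i) := by
          simp only [dotProduct, Finset.mul_sum]
          rw [← Finset.sum_add_distrib, ← Finset.sum_add_distrib]
          congr 1; funext i; ring
      _ = 0 := h3
  have hre := congrArg Complex.re heq
  have him := congrArg Complex.im heq
  simp [Complex.add_re, Complex.add_im, Complex.mul_re, Complex.mul_im, pow_two] at hre him
  by_contra hcon
  push_neg at hcon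
  rcases eq_or_ne lam.im 0 with hq0 | hq0
  · rw [hq0] at hre
    nlinarith [mul_nonneg hcon hcon, mul_nonneg (mul_nonneg hcon hcon) hα.le,
      mul_nonneg hcon hβ.le]
  · have him' : β + 2 * lam.re * α = 0 := by
      have h4 : lam.im * (β + 2 * lam.re * α) = 0 := by nlinarith [him]
      rcases mul_eq_zero.mp h4 with h | h
      · exact absurd h hq0
      · exact h
    nlinarith [mul_nonneg hcon hα.le]
end
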